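/- arXiv:1709.07466 — 2 statements merged into one kernel-verified Lean document; each statement's English description precedes it below -/
import Mathlib

section
/- The 6-girth-thickness of the complete graph K_7 equals 3, i.e., θ(6, K_7) = 3; in particular, K_7 is the union of 3 planar subgraphs each of girth at least 6. -/
/-- A simple graph is *planar* if it can be drawn in the Euclidean plane: vertices are
distinct points, each edge is drawn as an injective arc between the images of its
endpoints, and no interior point of an arc is the image of a vertex or lies on the arc
of a different edge. -/
def SimpleGraph.IsPlanar {V : Type*} (G : SimpleGraph V) : Prop :=
  ∃ (f : V → ℝ × ℝ) (γ : ∀ u v, G.Adj u v → _root_.Path (f u) (f v)),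
    Function.Injective f ∧
    (∀ u v (h : G.Adj u v), Function.Injective (γ u v h)) ∧
    (∀ u v (h : G.Adj u v) (t : unitInterval), t ≠ 0 → t ≠ 1 → ∀ w, γ u v h t ≠ f w) ∧
    (∀ u v (h : G.Adj u v) (u' v' : V) (h' : G.Adj u' v'), s(u, v) ≠ s(u', v') →
      ∀ (s t : unitInterval), s ≠ 0 → s ≠ 1 → t ≠ 0 → t ≠ 1 →
        γ u v h s ≠ γ u' v' h' t)

/-- The `g`-girth-thickness `θ(g, G)` of a graph `G`: the minimum number of planar
subgraphs, each of girth at least `g`, whose union is `G`. -/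
noncomputable def girthThickness {V : Type*} (g : ℕ∞) (G : SimpleGraph V) : ℕ :=
  sInf {m : ℕ | ∃ H : Fin m → SimpleGraph V,
    (∀ i, (H i).IsPlanar) ∧ (∀ i, g ≤ (H i).egirth) ∧ (⨆ i, H i) = G}



def stepD (x y : Fin 7) : Prop := y = x + 1 ∨ x = y + 1

instance : ∀ x y, Decidable (stepD x y) := fun _ _ => inferInstanceAs (Decidable (_ ∨ _))

lemma step3 : ∀ x y z : Fin 7, stepD x y → stepD y z → stepD z x → False := by decide
lemma step4 : ∀ x y z w : Fin 7, stepD x y → stepD y z → stepD z w → stepD w x →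
    x = z ∨ y = w := by decide
lemma step5 : ∀ x y z w v : Fin 7, stepD x y → stepD y z → stepD z w → stepD w v →
    stepD v x → False := by decide

open SimpleGraph in
lemma six_le_egirth_of_step {G : SimpleGraph (Fin 7)} {e : Fin 7 → Fin 7}
    (he : Function.Injective e)
    (hstep : ∀ u v, G.Adj u v → stepD (e u) (e v)) : 6 ≤ G.egirth := by
  rw [SimpleGraph.le_egirth]
  intro a w hw
  by_contra hle
  push_neg at hle
  have hlen : w.length ≤ 5 := by
    have : (w.length : ℕ∞) < (6 : ℕ) := by exact_mod_cast hle
    exact_mod_cast Nat.lt_succ_iff.mp (by exact_mod_cast this)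
  have h3 : 3 ≤ w.length := hw.three_le_length
  have hnd := hw.2
  rcases w with _ | ⟨h1, w⟩
  · simp at h3
  rcases w with _ | ⟨h2, w⟩
  · simp at h3
  rcases w with _ | ⟨h3', w⟩
  · simp at h3
  rcases w with _ | ⟨h4, w⟩
  · -- length 3
    exact step3 _ _ _ (hstep _ _ h1) (hstep _ _ h2) (hstep _ _ h3')
  rcases w with _ | ⟨h5, w⟩
  · -- length 4
    simp [SimpleGraph.Walk.support] at hnd
    rcases step4 _ _ _ _ (hstep _ _ h1) (hstep _ _ h2) (hstep _ _ h3') (hstep _ _ h4) with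
      h | h
    · have := he h
      simp_all
    · have := he h
      simp_all
  rcases w with _ | ⟨h6, w⟩
  · -- length 5
    exact step5 _ _ _ _ _ (hstep _ _ h1) (hstep _ _ h2) (hstep _ _ h3') (hstep _ _ h4)
      (hstep _ _ h5)
  · simp [SimpleGraph.Walk.length] at hlen



noncomputable def seg (p q : ℝ × ℝ) : Path p q where
  toFun t := ((1 - (t:ℝ)) * p.1 + t * q.1, (1 - (t:ℝ)) * p.2 + t * q.2)
  continuous_toFun := by fun_prop
  source' := by simp
  target' := by simp

lemma unit_pos {t : unitInterval} (h : t ≠ 0) : (0:ℝ) < t :=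
  lt_of_le_of_ne t.2.1 (fun hc => h (Subtype.ext hc.symm))

lemma unit_lt_one {t : unitInterval} (h : t ≠ 1) : (t:ℝ) < 1 :=
  lt_of_le_of_ne t.2.2 (fun hc => h (Subtype.ext hc))

lemma chord_short {k : ℕ} {A B s : ℝ} (hs0 : 0 < s) (hs1 : s < 1)
    (hA : (A = k ∧ B = k + 1) ∨ (B = k ∧ A = k + 1)) :
    ((k:ℝ) < (1 - s) * A + s * B ∧ (1 - s) * A + s * B < k + 1) ∧
      (1 - s) * A ^ 2 + s * B ^ 2 =
        (2 * k + 1) * ((1 - s) * A + s * B) - k * (k + 1) := by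
  rcases hA with ⟨h1, h2⟩ | ⟨h1, h2⟩ <;> subst h1 h2 <;>
    refine ⟨⟨by nlinarith, by nlinarith⟩, by ring⟩

lemma chord_long {A B s : ℝ} (hs0 : 0 < s) (hs1 : s < 1)
    (hA : (A = 0 ∧ B = 6) ∨ (B = 0 ∧ A = 6)) :
    (1 - s) * A ^ 2 + s * B ^ 2 = 6 * ((1 - s) * A + s * B) := by
  rcases hA with ⟨h1, h2⟩ | ⟨h1, h2⟩ <;> subst h1 h2 <;> ring

lemma combine_short_short {k j : ℕ} (hkj : k ≠ j) {X : ℝ}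
    (h1 : (k:ℝ) < X ∧ X < k + 1) (h2 : (j:ℝ) < X ∧ X < j + 1) : False := by
  rcases (by omega : k + 1 ≤ j ∨ j + 1 ≤ k) with h | h
  · have hr : ((k:ℝ)) + 1 ≤ j := by exact_mod_cast h
    linarith [h1.1, h1.2, h2.1, h2.2]
  · have hr : ((j:ℝ)) + 1 ≤ k := by exact_mod_cast h
    linarith [h1.1, h1.2, h2.1, h2.2]

lemma combine_short_long {k : ℕ} (hk : k ≤ 5) {X Y : ℝ}
    (hx : (k:ℝ) < X ∧ X < k + 1) (hy : Y = (2 * k + 1) * X - k * (k + 1))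
    (hy' : Y = 6 * X) : False := by
  interval_cases k <;> (push_cast at hx hy; linarith [hx.1, hx.2])

lemma stepD_cases : ∀ x y : Fin 7, stepD x y →
    (y.val = x.val + 1 ∧ x.val ≤ 5) ∨ (x.val = y.val + 1 ∧ y.val ≤ 5) ∨
    (x.val = 0 ∧ y.val = 6) ∨ (x.val = 6 ∧ y.val = 0) := by decide

lemma desc_real {x y : Fin 7} (h : stepD x y) :
    (∃ k : ℕ, k ≤ 5 ∧ (((x.val:ℝ) = k ∧ (y.val:ℝ) = k + 1) ∨
      ((y.val:ℝ) = k ∧ (x.val:ℝ) = k + 1))) ∨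
    (((x.val:ℝ) = 0 ∧ (y.val:ℝ) = 6) ∨ ((y.val:ℝ) = 0 ∧ (x.val:ℝ) = 6)) := by
  rcases stepD_cases x y h with ⟨h1, h2⟩ | ⟨h1, h2⟩ | ⟨h1, h2⟩ | ⟨h1, h2⟩
  · exact Or.inl ⟨x.val, h2, Or.inl ⟨rfl, by exact_mod_cast congrArg (Nat.cast : ℕ → ℝ) h1⟩⟩
  · exact Or.inl ⟨y.val, h2, Or.inr ⟨rfl, by exact_mod_cast congrArg (Nat.cast : ℕ → ℝ) h1⟩⟩
  · exact Or.inr (Or.inl ⟨by exact_mod_cast h1, by exact_mod_cast h2⟩)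
  · exact Or.inr (Or.inr ⟨by exact_mod_cast h2, by exact_mod_cast h1⟩)

lemma isPlanar_of_step {G : SimpleGraph (Fin 7)} {e : Fin 7 → Fin 7}
    (he : Function.Injective e)
    (hstep : ∀ u v, G.Adj u v → stepD (e u) (e v)) : G.IsPlanar := by
  classical
  have hx_inj : ∀ {u v : Fin 7}, ((e u).val : ℝ) = ((e v).val : ℝ) → u = v := by
    intro u v hc
    exact he (Fin.val_injective (by exact_mod_cast hc))
  have edge_eq : ∀ (u v u' v' : Fin 7) (a b : ℝ),
      ((((e u).val:ℝ) = a ∧ ((e v).val:ℝ) = b) ∨ (((e v).val:ℝ) = a ∧ ((e u).val:ℝ) = b)) →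
      ((((e u').val:ℝ) = a ∧ ((e v').val:ℝ) = b) ∨ (((e v').val:ℝ) = a ∧ ((e u').val:ℝ) = b)) →
      s(u, v) = s(u', v') := by
    intro u v u' v' a b h1 h2
    rcases h1 with ⟨p1, p2⟩ | ⟨p1, p2⟩ <;> rcases h2 with ⟨q1, q2⟩ | ⟨q1, q2⟩
    · rw [hx_inj (p1.trans q1.symm), hx_inj (p2.trans q2.symm)]
    · rw [hx_inj (p1.trans q1.symm), hx_inj (p2.trans q2.symm)]
      exact Sym2.eq_swap
    · rw [hx_inj (p2.trans q2.symm), hx_inj (p1.trans q1.symm)]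
      exact Sym2.eq_swap
    · rw [hx_inj (p1.trans q1.symm), hx_inj (p2.trans q2.symm)]
  refine ⟨fun v => (((e v).val : ℝ), ((e v).val : ℝ) ^ 2),
    fun u v h => seg _ _, ?_, ?_, ?_, ?_⟩
  · intro u v huv
    exact hx_inj (congrArg Prod.fst huv)
  · intro u v h s t hst
    have hab : ((e u).val:ℝ) ≠ ((e v).val:ℝ) := fun hc => (G.ne_of_adj h) (hx_inj hc)
    have hx : (1 - (s:ℝ)) * ((e u).val:ℝ) + s * ((e v).val:ℝ) =
        (1 - (t:ℝ)) * ((e u).val:ℝ) + t * ((e v).val:ℝ) := congrArg Prod.fst hst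
    have h2 : ((s:ℝ) - t) * (((e v).val:ℝ) - ((e u).val:ℝ)) = 0 := by linear_combination hx
    rcases mul_eq_zero.mp h2 with h3 | h3
    · exact Subtype.ext (by linarith)
    · exact absurd (by linarith : ((e u).val:ℝ) = ((e v).val:ℝ)) hab
  · intro u v h t ht0 ht1 w heq
    have hab : ((e u).val:ℝ) ≠ ((e v).val:ℝ) := fun hc => (G.ne_of_adj h) (hx_inj hc)
    have ht0' := unit_pos ht0
    have ht1' := unit_lt_one ht1
    have hx : (1 - (t:ℝ)) * ((e u).val:ℝ) + t * ((e v).val:ℝ) = ((e w).val:ℝ) :=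
      congrArg Prod.fst heq
    have hy : (1 - (t:ℝ)) * ((e u).val:ℝ) ^ 2 + t * ((e v).val:ℝ) ^ 2 = ((e w).val:ℝ) ^ 2 :=
      congrArg Prod.snd heq
    have key : (1 - (t:ℝ)) * ((e u).val:ℝ) ^ 2 + t * ((e v).val:ℝ) ^ 2 -
        ((1 - (t:ℝ)) * ((e u).val:ℝ) + t * ((e v).val:ℝ)) ^ 2 =
        t * (1 - t) * (((e u).val:ℝ) - ((e v).val:ℝ)) ^ 2 := by ring
    have hpos : 0 < (t:ℝ) * (1 - t) * (((e u).val:ℝ) - ((e v).val:ℝ)) ^ 2 :=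
      mul_pos (mul_pos ht0' (by linarith)) (sq_pos_of_ne_zero (sub_ne_zero.mpr hab))
    rw [hx, hy] at key
    have hzero : (t:ℝ) * (1 - t) * (((e u).val:ℝ) - ((e v).val:ℝ)) ^ 2 = 0 := by
      linarith [key]
    exact absurd hzero (ne_of_gt hpos)
  · intro u v h u' v' h' hne s t hs0 hs1 ht0 ht1 heq
    have hs0' := unit_pos hs0
    have hs1' := unit_lt_one hs1
    have ht0' := unit_pos ht0
    have ht1' := unit_lt_one ht1
    have hx : (1 - (s:ℝ)) * ((e u).val:ℝ) + s * ((e v).val:ℝ) =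
        (1 - (t:ℝ)) * ((e u').val:ℝ) + t * ((e v').val:ℝ) := congrArg Prod.fst heq
    have hy : (1 - (s:ℝ)) * ((e u).val:ℝ) ^ 2 + s * ((e v).val:ℝ) ^ 2 =
        (1 - (t:ℝ)) * ((e u').val:ℝ) ^ 2 + t * ((e v').val:ℝ) ^ 2 := congrArg Prod.snd heq
    rcases desc_real (hstep u v h) with ⟨k, hk, hA⟩ | hA <;>
      rcases desc_real (hstep u' v' h') with ⟨j, hj, hB⟩ | hB
    · by_cases hkj : k = j
      · subst hkj
        exact hne (edge_eq u v u' v' k (k + 1) hA hB)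
      · have c1 := chord_short hs0' hs1' hA
        have c2 := chord_short ht0' ht1' hB
        have c2' := c2.1
        rw [← hx] at c2'
        exact combine_short_short hkj c1.1 c2'
    · have c1 := chord_short hs0' hs1' hA
      have c2 := chord_long ht0' ht1' hB
      exact combine_short_long hk c1.1 c1.2 (by rw [hy, hx]; exact c2)
    · have c1 := chord_long hs0' hs1' hA
      have c2 := chord_short ht0' ht1' hB
      exact combine_short_long hj c2.1 c2.2 (by rw [← hy, ← hx]; exact c1)
    · exact hne (edge_eq u v u' v' 0 6 hA hB)


def Hg (d : Fin 7) : SimpleGraph (Fin 7) where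
  Adj u v := u ≠ v ∧ (v = u + d ∨ u = v + d)
  symm := ⟨fun _ _ h => ⟨h.1.symm, h.2.symm⟩⟩
  loopless := ⟨fun _ h => h.1 rfl⟩

instance (d : Fin 7) : DecidableRel (Hg d).Adj :=
  fun _ _ => inferInstanceAs (Decidable (_ ∧ _))

def HH : Fin 3 → SimpleGraph (Fin 7) := ![Hg 1, Hg 2, Hg 3]

instance : ∀ (i : Fin 3) (u v : Fin 7), Decidable ((HH i).Adj u v) := fun i =>
  match i with
  | 0 => fun u v => inferInstanceAs (Decidable ((Hg 1).Adj u v))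
  | 1 => fun u v => inferInstanceAs (Decidable ((Hg 2).Adj u v))
  | 2 => fun u v => inferInstanceAs (Decidable ((Hg 3).Adj u v))

def ec : Fin 3 → Fin 7 := ![1, 4, 5]

lemma he_i (i : Fin 3) : Function.Injective (fun v : Fin 7 => v * ec i) := by
  fin_cases i <;> decide

lemma hstep_i (i : Fin 3) : ∀ u v, (HH i).Adj u v → stepD (u * ec i) (v * ec i) := by
  fin_cases i <;> decide

lemma hsup : (⨆ i, HH i) = SimpleGraph.completeGraph (Fin 7) := by
  ext u v
  rw [SimpleGraph.iSup_adj]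
  show (∃ i, (HH i).Adj u v) ↔ u ≠ v
  revert u v
  decide

lemma egirth_lt_of_triangle {V : Type*} {G : SimpleGraph V} {a b c : V}
    (hab : G.Adj a b) (hbc : G.Adj b c) (hca : G.Adj c a) : ¬ (6 ≤ G.egirth) := by
  intro h6
  have hcyc : (SimpleGraph.Walk.cons hab (SimpleGraph.Walk.cons hbc
      (SimpleGraph.Walk.cons hca SimpleGraph.Walk.nil))).IsCycle := by
    have h1 := hab.ne
    have h2 := hbc.ne
    have h3 := hca.ne
    have h4 := hca.ne'
    simp [SimpleGraph.Walk.isCycle_def, SimpleGraph.Walk.isTrail_def, Sym2.eq_iff]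
    aesop
  have := SimpleGraph.le_egirth.mp h6 a _ hcyc
  simp [SimpleGraph.Walk.length] at this
  norm_num at this

lemma get3 {F : Finset (Fin 7)} (h : 3 ≤ F.card) :
    ∃ a b c : Fin 7, a ∈ F ∧ b ∈ F ∧ c ∈ F ∧ a ≠ b ∧ a ≠ c ∧ b ≠ c := by
  obtain ⟨t, htF, ht3⟩ := Finset.exists_subset_card_eq h
  obtain ⟨a, b, c, hab, hac, hbc, rfl⟩ := Finset.card_eq_three.mp ht3
  exact ⟨a, b, c, htF (by simp), htF (by simp), htF (by simp), hab, hac, hbc⟩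

lemma mono_triangle (G1 G2 : SimpleGraph (Fin 7))
    (hcov : ∀ u v : Fin 7, u ≠ v → G1.Adj u v ∨ G2.Adj u v) :
    (∃ a b c, G1.Adj a b ∧ G1.Adj b c ∧ G1.Adj c a) ∨
    (∃ a b c, G2.Adj a b ∧ G2.Adj b c ∧ G2.Adj c a) := by
  classical
  set s : Finset (Fin 7) := Finset.univ.erase 0 with hs
  have hsc : s.card = 6 := by rw [hs]; simp [Finset.card_erase_of_mem]
  have hsplit := Finset.card_filter_add_card_filter_not
    (s := s) (p := fun v => G1.Adj 0 v)
  rcases (by omega : 3 ≤ (s.filter (fun v => G1.Adj 0 v)).card ∨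
      3 ≤ (s.filter (fun v => ¬ G1.Adj 0 v)).card) with h | h
  · obtain ⟨a, b, c, ha, hb, hc, hab, hac, hbc⟩ := get3 h
    rw [Finset.mem_filter] at ha hb hc
    have ha' := ha.2; have hb' := hb.2; have hc' := hc.2
    by_cases e1 : G1.Adj a b
    · exact Or.inl ⟨a, b, 0, e1, hb'.symm, ha'⟩
    by_cases e2 : G1.Adj b c
    · exact Or.inl ⟨b, c, 0, e2, hc'.symm, hb'⟩
    by_cases e3 : G1.Adj c a
    · exact Or.inl ⟨c, a, 0, e3, ha'.symm, hc'⟩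
    · exact Or.inr ⟨a, b, c, (hcov a b hab).resolve_left e1,
        (hcov b c hbc).resolve_left e2, (hcov c a hac.symm).resolve_left e3⟩
  · obtain ⟨a, b, c, ha, hb, hc, hab, hac, hbc⟩ := get3 h
    rw [Finset.mem_filter, hs, Finset.mem_erase] at ha hb hc
    have ha' : G2.Adj 0 a := (hcov 0 a (Ne.symm ha.1.1)).resolve_left ha.2
    have hb' : G2.Adj 0 b := (hcov 0 b (Ne.symm hb.1.1)).resolve_left hb.2
    have hc' : G2.Adj 0 c := (hcov 0 c (Ne.symm hc.1.1)).resolve_left hc.2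
    by_cases e1 : G2.Adj a b
    · exact Or.inr ⟨a, b, 0, e1, hb'.symm, ha'⟩
    by_cases e2 : G2.Adj b c
    · exact Or.inr ⟨b, c, 0, e2, hc'.symm, hb'⟩
    by_cases e3 : G2.Adj c a
    · exact Or.inr ⟨c, a, 0, e3, ha'.symm, hc'⟩
    · exact Or.inl ⟨a, b, c, (hcov a b hab).resolve_right e1,
        (hcov b c hbc).resolve_right e2, (hcov c a hac.symm).resolve_right e3⟩

theorem girthThickness_six_K7 :
    girthThickness 6 (SimpleGraph.completeGraph (Fin 7)) = 3 ∧
    ∃ H : Fin 3 → SimpleGraph (Fin 7),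
      (∀ i, (H i).IsPlanar) ∧ (∀ i, 6 ≤ (H i).egirth) ∧
      (⨆ i, H i) = SimpleGraph.completeGraph (Fin 7) := by
  have hplanar : ∀ i, (HH i).IsPlanar := fun i => isPlanar_of_step (he_i i) (hstep_i i)
  have hgirth : ∀ i, (6:ℕ∞) ≤ (HH i).egirth := fun i =>
    six_le_egirth_of_step (he_i i) (hstep_i i)
  have hmem : 3 ∈ {m : ℕ | ∃ H : Fin m → SimpleGraph (Fin 7),
      (∀ i, (H i).IsPlanar) ∧ (∀ i, (6:ℕ∞) ≤ (H i).egirth) ∧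
      (⨆ i, H i) = SimpleGraph.completeGraph (Fin 7)} := ⟨HH, hplanar, hgirth, hsup⟩
  constructor
  · refine le_antisymm (Nat.sInf_le hmem) (le_csInf ⟨3, hmem⟩ ?_)
    rintro m ⟨H', hp, hg, hs⟩
    by_contra hlt
    push_neg at hlt
    have hcov' : ∀ u v : Fin 7, u ≠ v → ∃ i : Fin m, (H' i).Adj u v := by
      intro u v huv
      have : (⨆ i, H' i).Adj u v := by rw [hs]; exact huv
      exact SimpleGraph.iSup_adj.mp this
    have hm : 0 < m := by
      rcases hcov' 0 1 (by decide) with ⟨i, _⟩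
      exact i.pos
    have hm2 : m - 1 < m := by omega
    have hcov : ∀ u v : Fin 7, u ≠ v → (H' ⟨0, hm⟩).Adj u v ∨ (H' ⟨m - 1, hm2⟩).Adj u v := by
      intro u v huv
      rcases hcov' u v huv with ⟨i, hi⟩
      have hiv := i.isLt
      rcases (by omega : i.val = 0 ∨ i.val = m - 1) with h | h
      · exact Or.inl (by rwa [show (⟨0, hm⟩ : Fin m) = i from Fin.ext h.symm])
      · exact Or.inr (by rwa [show (⟨m - 1, hm2⟩ : Fin m) = i from Fin.ext h.symm])
    rcases mono_triangle _ _ hcov with ⟨a, b, c, h1, h2, h3⟩ | ⟨a, b, c, h1, h2, h3⟩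
    · exact egirth_lt_of_triangle h1 h2 h3 (hg _)
    · exact egirth_lt_of_triangle h1 h2 h3 (hg _)
  · exact ⟨HH, hplanar, hgirth, hsup⟩
end

section
/- The complete graph K_{10} is the union of 3 planar subgraphs each of girth at least 4 (i.e., 3 triangle-free planar subgraphs), and consequently the 4-girth-thickness of K_{10} equals 3: θ(4, K_{10}) = 3. -/
namespace K10Aux


def orient (a b c : ℤ × ℤ) : ℤ := (b.1-a.1)*(c.2-a.2) - (b.2-a.2)*(c.1-a.1)

noncomputable def orientR (a b c : ℝ × ℝ) : ℝ := (b.1-a.1)*(c.2-a.2) - (b.2-a.2)*(c.1-a.1)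

def toR (p : ℤ × ℤ) : ℝ × ℝ := ((p.1 : ℝ), (p.2 : ℝ))

lemma toR_inj : Function.Injective toR := by
  intro a b h
  simp only [toR, Prod.mk.injEq, Int.cast_injective.eq_iff] at h
  exact Prod.ext h.1 h.2

lemma orientR_toR (a b c : ℤ × ℤ) :
    orientR (toR a) (toR b) (toR c) = (orient a b c : ℤ) := by
  simp only [orientR, orient, toR]
  push_cast
  ring

lemma orientR_comb (a b c d : ℝ × ℝ) (t : ℝ) :
    orientR a b ((1-t) • c + t • d) = (1-t) * orientR a b c + t * orientR a b d := by
  simp only [orientR, Prod.fst_add, Prod.snd_add, Prod.smul_fst, Prod.smul_snd, smul_eq_mul]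
  ring

lemma orientR_left (a b : ℝ × ℝ) : orientR a b a = 0 := by simp only [orientR]; ring

lemma orientR_right (a b : ℝ × ℝ) : orientR a b b = 0 := by simp only [orientR]; ring

noncomputable def seg (a b : ℝ × ℝ) : _root_.Path a b where
  toFun := fun t => (1 - (t:ℝ)) • a + (t:ℝ) • b
  continuous_toFun := by fun_prop
  source' := by norm_num
  target' := by norm_num

lemma seg_apply (a b : ℝ × ℝ) (t : unitInterval) :
    seg a b t = (1 - (t:ℝ)) • a + (t:ℝ) • b := rfl

lemma orientR_seg (a b : ℝ × ℝ) (t : unitInterval) :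
    orientR a b (seg a b t) = 0 := by
  rw [seg_apply, orientR_comb, orientR_left, orientR_right]
  ring

lemma coe_ne_zero {t : unitInterval} (h : t ≠ 0) : (t : ℝ) ≠ 0 :=
  fun hc => h (Subtype.ext hc)

lemma coe_ne_one {t : unitInterval} (h : t ≠ 1) : (t : ℝ) ≠ 1 :=
  fun hc => h (Subtype.ext hc)

lemma seg_eq_aux {a b : ℝ × ℝ} {s t : ℝ} (h : (1-s) • a + s • b = (1-t) • a + t • b) :
    (s - t) * (b.1 - a.1) = 0 ∧ (s - t) * (b.2 - a.2) = 0 := by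
  rw [Prod.ext_iff] at h
  simp only [Prod.fst_add, Prod.snd_add, Prod.smul_fst, Prod.smul_snd, smul_eq_mul] at h
  exact ⟨by linear_combination h.1, by linear_combination h.2⟩

lemma seg_eq_param {a b : ℝ × ℝ} {s t : ℝ} (hab : a ≠ b)
    (h : (1-s) • a + s • b = (1-t) • a + t • b) : s = t := by
  obtain ⟨h1, h2⟩ := seg_eq_aux h
  by_contra hne
  have hs : s - t ≠ 0 := sub_ne_zero.mpr hne
  apply hab
  have e1 : b.1 - a.1 = 0 := by rcases mul_eq_zero.mp h1 with h' | h'; exact absurd h' hs; exact h'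
  have e2 : b.2 - a.2 = 0 := by rcases mul_eq_zero.mp h2 with h' | h'; exact absurd h' hs; exact h'
  exact (Prod.ext (by linarith) (by linarith)).symm

lemma seg_injective {a b : ℝ × ℝ} (hab : a ≠ b) : Function.Injective (seg a b) := by
  intro s t hst
  rw [seg_apply, seg_apply] at hst
  exact Subtype.ext (seg_eq_param hab hst)

lemma comb_ne_zero {A B t : ℝ} (h : 0 < A * B) (ht0 : 0 ≤ t) (ht1 : t ≤ 1) :
    (1-t) * A + t * B ≠ 0 := by
  rcases mul_pos_iff.mp h with ⟨hA, hB⟩ | ⟨hA, hB⟩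
  · rcases ht1.lt_or_eq with h' | h'
    · have p1 : 0 < (1-t) * A := mul_pos (by linarith) hA
      have p2 : 0 ≤ t * B := mul_nonneg ht0 hB.le
      exact ne_of_gt (by linarith)
    · subst h'
      have : (1-1) * A + 1 * B = B := by ring
      rw [this]; exact ne_of_gt hB
  · rcases ht1.lt_or_eq with h' | h'
    · have p1 : (1-t) * A < 0 := mul_neg_of_pos_of_neg (by linarith) hA
      have p2 : t * B ≤ 0 := mul_nonpos_of_nonneg_of_nonpos ht0 hB.le
      exact ne_of_lt (by linarith)
    · subst h'
      have : (1-1) * A + 1 * B = B := by ring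
      rw [this]; exact ne_of_lt hB

lemma isPlanar_of_orient (G : SimpleGraph (Fin 10)) (g : Fin 10 → ℤ × ℤ)
    (h1 : Function.Injective g)
    (h2 : ∀ u v w, G.Adj u v → w ≠ u → w ≠ v → orient (g u) (g v) (g w) ≠ 0)
    (h3 : ∀ u v u' v', G.Adj u v → G.Adj u' v' → u' ≠ u → u' ≠ v → v' ≠ u → v' ≠ v →
        0 < orient (g u) (g v) (g u') * orient (g u) (g v) (g v') ∨
        0 < orient (g u') (g v') (g u) * orient (g u') (g v') (g v)) :
    G.IsPlanar := by
  have finj : Function.Injective (fun v => toR (g v)) := fun a b h => h1 (toR_inj h)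
  refine ⟨fun v => toR (g v), fun u v _ => seg (toR (g u)) (toR (g v)), finj, ?_, ?_, ?_⟩
  case _ =>
    intro u v h
    exact seg_injective (fun hc => h.ne (finj hc))
  case _ =>
    intro u v h t ht0 ht1 w heq
    simp only at heq
    rcases eq_or_ne w u with rfl | hwu
    · rw [seg_apply] at heq
      have heq' : (1-(t:ℝ)) • toR (g w) + (t:ℝ) • toR (g v)
          = (1-(0:ℝ)) • toR (g w) + (0:ℝ) • toR (g v) := by
        rw [heq]; norm_num
      have := seg_eq_param (fun hc => h.ne (finj hc)) heq'
      exact coe_ne_zero ht0 this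
    rcases eq_or_ne w v with rfl | hwv
    · rw [seg_apply] at heq
      have heq' : (1-(t:ℝ)) • toR (g u) + (t:ℝ) • toR (g w)
          = (1-(1:ℝ)) • toR (g u) + (1:ℝ) • toR (g w) := by
        rw [heq]; norm_num
      have := seg_eq_param (fun hc => h.ne (finj hc)) heq'
      exact coe_ne_one ht1 this
    · have hO : orientR (toR (g u)) (toR (g v)) (toR (g w)) ≠ 0 := by
        rw [orientR_toR]
        exact_mod_cast h2 u v w h hwu hwv
      apply hO
      rw [← heq]
      exact orientR_seg _ _ _
  case _ =>
    intro u v h u' v' h' hne s t hs0 hs1 ht0 ht1 heq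
    simp only at heq
    have hz : (1-(t:ℝ)) * orientR (toR (g u)) (toR (g v)) (toR (g u'))
        + (t:ℝ) * orientR (toR (g u)) (toR (g v)) (toR (g v')) = 0 := by
      rw [← orientR_comb, ← seg_apply, ← heq]
      exact orientR_seg _ _ _
    by_cases hc1 : u' = u
    · subst hc1
      rw [orientR_left] at hz
      have hv' : v' ≠ v := fun hveq => hne (by rw [hveq])
      have hB : orientR (toR (g u')) (toR (g v)) (toR (g v')) ≠ 0 := by
        rw [orientR_toR]; exact_mod_cast h2 u' v v' h h'.ne' hv'
      exact mul_ne_zero (coe_ne_zero ht0) hB (by linarith)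
    by_cases hc2 : u' = v
    · subst hc2
      rw [orientR_right] at hz
      have hv' : v' ≠ u := fun hc => hne (by rw [hc, Sym2.eq_swap])
      have hB : orientR (toR (g u)) (toR (g u')) (toR (g v')) ≠ 0 := by
        rw [orientR_toR]; exact_mod_cast h2 u u' v' h hv' h'.ne'
      exact mul_ne_zero (coe_ne_zero ht0) hB (by linarith)
    by_cases hc3 : v' = u
    · subst hc3
      rw [orientR_left] at hz
      have hu' : u' ≠ v := fun hc => hne (by rw [hc, Sym2.eq_swap])
      have hA : orientR (toR (g v')) (toR (g v)) (toR (g u')) ≠ 0 := by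
        rw [orientR_toR]; exact_mod_cast h2 v' v u' h h'.ne hu'
      have h1t : (1:ℝ) - (t:ℝ) ≠ 0 := sub_ne_zero.mpr (Ne.symm (coe_ne_one ht1))
      exact mul_ne_zero h1t hA (by linarith)
    by_cases hc4 : v' = v
    · subst hc4
      rw [orientR_right] at hz
      have hu' : u' ≠ u := fun hc => hne (by rw [hc])
      have hA : orientR (toR (g u)) (toR (g v')) (toR (g u')) ≠ 0 := by
        rw [orientR_toR]; exact_mod_cast h2 u v' u' h hu' h'.ne
      have h1t : (1:ℝ) - (t:ℝ) ≠ 0 := sub_ne_zero.mpr (Ne.symm (coe_ne_one ht1))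
      exact mul_ne_zero h1t hA (by linarith)
    · rcases h3 u v u' v' h h' hc1 hc2 hc3 hc4 with hpos | hpos
      · have hposR : 0 < orientR (toR (g u)) (toR (g v)) (toR (g u'))
            * orientR (toR (g u)) (toR (g v)) (toR (g v')) := by
          rw [orientR_toR, orientR_toR]
          exact_mod_cast hpos
        exact comb_ne_zero hposR t.2.1 t.2.2 hz
      · have hz' : (1-(s:ℝ)) * orientR (toR (g u')) (toR (g v')) (toR (g u))
            + (s:ℝ) * orientR (toR (g u')) (toR (g v')) (toR (g v)) = 0 := by
          rw [← orientR_comb, ← seg_apply, heq]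
          exact orientR_seg _ _ _
        have hposR : 0 < orientR (toR (g u')) (toR (g v')) (toR (g u))
            * orientR (toR (g u')) (toR (g v')) (toR (g v)) := by
          rw [orientR_toR, orientR_toR]
          exact_mod_cast hpos
        exact comb_ne_zero hposR s.2.1 s.2.2 hz'



open SimpleGraph

def TriFree {V : Type*} (G : SimpleGraph V) : Prop :=
  ∀ a b c, G.Adj a b → G.Adj b c → G.Adj c a → False

lemma four_le_egirth {V : Type*} {G : SimpleGraph V} (h : TriFree G) :
    4 ≤ G.egirth := by
  rw [SimpleGraph.le_egirth]
  intro a w hw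
  have h3 := hw.three_le_length
  rcases Nat.lt_or_ge w.length 4 with hlt | hge
  · exfalso
    have hlen : w.length = 3 := by omega
    clear h3 hlt
    cases w with
    | nil => simp at hlen
    | cons h1 p =>
      cases p with
      | nil => simp at hlen
      | cons h2 q =>
        cases q with
        | nil => simp at hlen
        | cons h3' r =>
          cases r with
          | nil => exact h _ _ _ h1 h2 h3'
          | cons h4 s => simp [SimpleGraph.Walk.length_cons] at hlen
  · exact_mod_cast Nat.cast_le.mpr hge

lemma triFree_of_four_le_egirth {V : Type*} {G : SimpleGraph V}
    (h : 4 ≤ G.egirth) : TriFree G := by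
  intro a b c hab hbc hca
  let w : G.Walk a a := .cons hab (.cons hbc (.cons hca .nil))
  have hcyc : w.IsCycle := by
    rw [SimpleGraph.Walk.isCycle_def]
    refine ⟨?_, by simp [w], ?_⟩
    · have n1 : a ≠ b := hab.ne
      have n2 : b ≠ c := hbc.ne
      have n3 : c ≠ a := hca.ne
      rw [SimpleGraph.Walk.isTrail_def]
      simp only [w, SimpleGraph.Walk.edges_cons, SimpleGraph.Walk.edges_nil,
        List.nodup_cons, List.mem_cons, List.not_mem_nil, or_false, List.nodup_nil,
        and_true, Sym2.eq_iff]
      tauto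
    · have n1 : a ≠ b := hab.ne
      have n2 : b ≠ c := hbc.ne
      have n3 : c ≠ a := hca.ne
      simp [w]
      tauto
  have := SimpleGraph.le_egirth.mp h a w hcyc
  have hlen : w.length = 3 := by simp [w]
  rw [hlen] at this
  exact absurd this (by norm_num)

lemma ramsey_two (H0 H1 : SimpleGraph (Fin 10))
    (tf0 : TriFree H0) (tf1 : TriFree H1)
    (cover : ∀ u v : Fin 10, u ≠ v → H0.Adj u v ∨ H1.Adj u v) : False := by
  classical
  have five_aux : ∀ (A B : SimpleGraph (Fin 10)), TriFree A → TriFree B →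
      ∀ S : Finset (Fin 10), 3 ≤ S.card → (∀ j ∈ S, A.Adj 0 j) →
      (∀ x ∈ S, ∀ y ∈ S, x ≠ y → A.Adj x y ∨ B.Adj x y) → False := by
    intro A B tfA tfB S hcard hadj hp
    by_cases hAB : ∃ x ∈ S, ∃ y ∈ S, x ≠ y ∧ A.Adj x y
    · obtain ⟨x, hx, y, hy, hxy, haxy⟩ := hAB
      exact tfA 0 x y (hadj x hx) haxy (hadj y hy).symm
    · push_neg at hAB
      obtain ⟨T, hTS, hT3⟩ := Finset.exists_subset_card_eq hcard
      obtain ⟨x, y, z, hxy, hxz, hyz, rfl⟩ := Finset.card_eq_three.mp hT3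
      have hx : x ∈ S := hTS (by simp)
      have hy : y ∈ S := hTS (by simp)
      have hz : z ∈ S := hTS (by simp)
      have bxy : B.Adj x y := (hp x hx y hy hxy).resolve_left (hAB x hx y hy hxy)
      have byz : B.Adj y z := (hp y hy z hz hyz).resolve_left (hAB y hy z hz hyz)
      have bzx : B.Adj z x := ((hp x hx z hz hxz).resolve_left (hAB x hx z hz hxz)).symm
      exact tfB x y z bxy byz bzx
  set S0 : Finset (Fin 10) := Finset.univ.filter (fun j => H0.Adj 0 j) with hS0
  set S1 : Finset (Fin 10) := Finset.univ.filter (fun j => j ≠ 0 ∧ ¬ H0.Adj 0 j) with hS1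
  have hsub : Finset.univ.erase (0 : Fin 10) ⊆ S0 ∪ S1 := by
    intro j hj
    have hj0 : j ≠ 0 := Finset.ne_of_mem_erase hj
    by_cases hadj : H0.Adj 0 j
    · exact Finset.mem_union_left _ (by simp [hS0, hadj])
    · exact Finset.mem_union_right _ (by simp [hS1, hj0, hadj])
  have h9 : 9 ≤ S0.card + S1.card := by
    have := Finset.card_le_card hsub
    have hu := Finset.card_union_le S0 S1
    have : (Finset.univ.erase (0 : Fin 10)).card = 9 := by
      rw [Finset.card_erase_of_mem (Finset.mem_univ _)]
      simp
    omega
  rcases (by omega : 3 ≤ S0.card ∨ 3 ≤ S1.card) with hc | hc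
  · refine five_aux H0 H1 tf0 tf1 S0 hc ?_ ?_
    · intro j hj; exact (Finset.mem_filter.mp hj).2
    · intro x hx y hy hxy; exact cover x y hxy
  · refine five_aux H1 H0 tf1 tf0 S1 hc ?_ ?_
    · intro j hj
      obtain ⟨hj0, hj1⟩ := (Finset.mem_filter.mp hj).2
      exact (cover 0 j (Ne.symm hj0)).resolve_left hj1
    · intro x hx y hy hxy; exact Or.symm (cover x y hxy)


-- ### Concrete data: three triangle-free planar graphs decomposing K₁₀,
-- with explicit integer straight-line drawings.

def E1 : List (Fin 10 × Fin 10) := [(0,4), (0,6), (0,8), (1,3), (1,5), (1,7), (2,6), (2,8), (2,9), (3,9), (4,7), (5,6), (5,9), (6,7), (7,8), (7,9)]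

def g1 : Fin 10 → ℤ × ℤ := ![(45,50), (37,25), (-2,99), (38,34), (64,32), (-1,1), (98,1), (45,43), (28,62), (21,42)]

def E2 : List (Fin 10 × Fin 10) := [(0,2), (0,3), (0,9), (1,2), (1,6), (1,9), (2,4), (2,7), (3,5), (3,8), (4,5), (4,6), (4,8), (5,7), (8,9)]

def g2 : Fin 10 → ℤ × ℤ := ![(8,40), (101,-2), (-3,-2), (20,33), (29,21), (13,24), (38,40), (7,21), (19,50), (-2,103)]

def E3 : List (Fin 10 × Fin 10) := [(0,1), (0,5), (0,7), (1,4), (1,8), (2,3), (2,5), (3,4), (3,6), (3,7), (4,9), (5,8), (6,8), (6,9)]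

def g3 : Fin 10 → ℤ × ℤ := ![(14,49), (7,46), (14,37), (24,39), (-3,99), (15,43), (2,-3), (15,46), (11,38), (100,2)]

def mkGraph (E : List (Fin 10 × Fin 10)) (hloop : ∀ w : Fin 10, ¬((w,w) ∈ E ∨ (w,w) ∈ E)) :
    SimpleGraph (Fin 10) where
  Adj u v := (u,v) ∈ E ∨ (v,u) ∈ E
  symm := ⟨fun _ _ h => Or.symm h⟩
  loopless := ⟨fun v h => hloop v h⟩

def G1 : SimpleGraph (Fin 10) := mkGraph E1 (by decide)
def G2 : SimpleGraph (Fin 10) := mkGraph E2 (by decide)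
def G3 : SimpleGraph (Fin 10) := mkGraph E3 (by decide)

instance : DecidableRel G1.Adj := fun u v => inferInstanceAs (Decidable (_ ∨ _))
instance : DecidableRel G2.Adj := fun u v => inferInstanceAs (Decidable (_ ∨ _))
instance : DecidableRel G3.Adj := fun u v => inferInstanceAs (Decidable (_ ∨ _))

set_option maxHeartbeats 2000000 in
lemma G1_planar : G1.IsPlanar :=
  isPlanar_of_orient G1 g1 (by decide) (by decide) (by decide)

set_option maxHeartbeats 2000000 in
lemma G2_planar : G2.IsPlanar :=
  isPlanar_of_orient G2 g2 (by decide) (by decide) (by decide)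

set_option maxHeartbeats 2000000 in
lemma G3_planar : G3.IsPlanar :=
  isPlanar_of_orient G3 g3 (by decide) (by decide) (by decide)

lemma G1_tf : TriFree G1 := by
  have h : ∀ a b c : Fin 10, ¬(G1.Adj a b ∧ G1.Adj b c ∧ G1.Adj c a) := by decide
  exact fun a b c h1 h2 h3 => h a b c ⟨h1, h2, h3⟩
lemma G2_tf : TriFree G2 := by
  have h : ∀ a b c : Fin 10, ¬(G2.Adj a b ∧ G2.Adj b c ∧ G2.Adj c a) := by decide
  exact fun a b c h1 h2 h3 => h a b c ⟨h1, h2, h3⟩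
lemma G3_tf : TriFree G3 := by
  have h : ∀ a b c : Fin 10, ¬(G3.Adj a b ∧ G3.Adj b c ∧ G3.Adj c a) := by decide
  exact fun a b c h1 h2 h3 => h a b c ⟨h1, h2, h3⟩

def Hfun : Fin 3 → SimpleGraph (Fin 10) := ![G1, G2, G3]

lemma Hfun_planar : ∀ i, (Hfun i).IsPlanar := by
  intro i
  fin_cases i
  · exact G1_planar
  · exact G2_planar
  · exact G3_planar

lemma Hfun_girth : ∀ i, (4 : ℕ∞) ≤ (Hfun i).egirth := by
  intro i
  fin_cases i
  · exact four_le_egirth G1_tf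
  · exact four_le_egirth G2_tf
  · exact four_le_egirth G3_tf

lemma Hfun_sup : (⨆ i, Hfun i) = completeGraph (Fin 10) := by
  ext u v
  rw [SimpleGraph.iSup_adj]
  constructor
  · rintro ⟨i, hi⟩
    exact hi.ne
  · intro hne
    have hne' : u ≠ v := hne
    clear hne
    have hd : G1.Adj u v ∨ G2.Adj u v ∨ G3.Adj u v := by revert hne'; revert u v; decide
    rcases hd with h | h | h
    · exact ⟨0, h⟩
    · exact ⟨1, h⟩
    · exact ⟨2, h⟩

end K10Aux

open K10Aux in
theorem girthThickness_four_K10 :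
    (∃ H : Fin 3 → SimpleGraph (Fin 10),
      (∀ i, (H i).IsPlanar) ∧ (∀ i, 4 ≤ (H i).egirth) ∧
      (⨆ i, H i) = SimpleGraph.completeGraph (Fin 10)) ∧
    girthThickness 4 (SimpleGraph.completeGraph (Fin 10)) = 3 := by
  have hmem : (3 : ℕ) ∈ {m : ℕ | ∃ H : Fin m → SimpleGraph (Fin 10),
      (∀ i, (H i).IsPlanar) ∧ (∀ i, (4:ℕ∞) ≤ (H i).egirth) ∧
      (⨆ i, H i) = SimpleGraph.completeGraph (Fin 10)} :=
    ⟨Hfun, Hfun_planar, Hfun_girth, Hfun_sup⟩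
  refine ⟨⟨Hfun, Hfun_planar, Hfun_girth, Hfun_sup⟩, ?_⟩
  unfold girthThickness
  apply le_antisymm
  · exact Nat.sInf_le hmem
  · apply le_csInf ⟨3, hmem⟩
    rintro m ⟨H, hpl, hg, hsup⟩
    by_contra hlt
    push_neg at hlt
    have tf : ∀ i, TriFree (H i) := fun i => triFree_of_four_le_egirth (hg i)
    have cover : ∀ u v : Fin 10, u ≠ v → ∃ i, (H i).Adj u v := by
      intro u v huv
      have hK : (SimpleGraph.completeGraph (Fin 10)).Adj u v := huv
      rw [← hsup] at hK
      exact SimpleGraph.iSup_adj.mp hK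
    interval_cases m
    · obtain ⟨i, _⟩ := cover 0 1 (by decide)
      exact i.elim0
    · have horne : ∀ u v : Fin 10, u ≠ v → (H 0).Adj u v := by
        intro u v huv
        obtain ⟨i, hi⟩ := cover u v huv
        have : i = 0 := Subsingleton.elim i 0
        rwa [this] at hi
      exact tf 0 0 1 2 (horne 0 1 (by decide)) (horne 1 2 (by decide))
        (horne 2 0 (by decide))
    · apply ramsey_two (H 0) (H 1) (tf 0) (tf 1)
      intro u v huv
      obtain ⟨i, hi⟩ := cover u v huv
      by_cases h0 : i = 0
      · exact Or.inl (h0 ▸ hi)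
      · exact Or.inr ((show i = 1 by revert h0; fin_cases i <;> simp) ▸ hi)
end
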